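/- The λ-gradient map is involutive in the following algebraic sense: if θ = ∇ψ(η)/(1 - λ ∇ψ(η)·η) and η = ∇φ(θ)/(1 - λ ∇φ(θ)·θ) for potentials φ, ψ, then 1 - λ ∇ψ(η)·η = 1/(1 + λ θ·η) = 1 - λ ∇φ(θ)·θ. -/

import Mathlib

open RealInnerProductSpace

/-- Involutivity of the λ-gradient: if `θ = ∇^{(λ)}ψ(η)` and `η = ∇^{(λ)}φ(θ)`, then
`1 - λ ∇ψ(η)·η = 1/(1 + λ θ·η) = 1 - λ ∇φ(θ)·θ`. -/
theorem lambda_gradient_involutive (d : ℕ) (lam : ℝ) (hlam : lam ≠ 0)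
    (φ ψ : EuclideanSpace ℝ (Fin d) → ℝ) (θ η : EuclideanSpace ℝ (Fin d))
    (hφ : DifferentiableAt ℝ φ θ) (hψ : DifferentiableAt ℝ ψ η)
    (hdenψ : 1 - lam * ⟪gradient ψ η, η⟫ ≠ 0)
    (hdenφ : 1 - lam * ⟪gradient φ θ, θ⟫ ≠ 0)
    (hθ : θ = (1 - lam * ⟪gradient ψ η, η⟫)⁻¹ • gradient ψ η)
    (hη : η = (1 - lam * ⟪gradient φ θ, θ⟫)⁻¹ • gradient φ θ) :
    1 - lam * ⟪gradient ψ η, η⟫ = 1 / (1 + lam * ⟪θ, η⟫) ∧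
      1 / (1 + lam * ⟪θ, η⟫) = 1 - lam * ⟪gradient φ θ, θ⟫ := by
  have h1 : ⟪θ, η⟫ = (1 - lam * ⟪gradient ψ η, η⟫)⁻¹ * ⟪gradient ψ η, η⟫ := by
    conv_lhs => rw [hθ, real_inner_smul_left]
  have h2 : ⟪θ, η⟫ = (1 - lam * ⟪gradient φ θ, θ⟫)⁻¹ * ⟪gradient φ θ, θ⟫ := by
    conv_lhs => rw [hη, real_inner_smul_right]
    rw [real_inner_comm θ (gradient φ θ)]
  generalize hs : (⟪gradient ψ η, η⟫ : ℝ) = s at *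
  generalize ht : (⟪gradient φ θ, θ⟫ : ℝ) = t at *
  have e1 : 1 + lam * ⟪θ, η⟫ = (1 - lam * s)⁻¹ := by
    rw [h1]; field_simp; ring
  have e2 : 1 + lam * ⟪θ, η⟫ = (1 - lam * t)⁻¹ := by
    rw [h2]; field_simp; ring
  constructor
  · rw [e1, one_div, inv_inv]
  · rw [e2, one_div, inv_inv]
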